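/- arXiv:2205.07544 — 2 statements merged into one kernel-verified Lean document; each statement's English description precedes it below -/
import Mathlib

section
/- If f is L-smooth, satisfies the PL condition with constant μ, and the inexact gradient method x_{k+1} = x_k - (1/L) g̃(x_k) is run with gradient error bounded by Δ, then f(x_{k+1}) - f* ≤ (1 - μ/L)^{k+1} (f(x_0) - f*) + Δ²/(2μ) for all k ≥ 0. -/
open scoped RealInnerProductSpace

-- descent lemma
lemma descent {n : ℕ} (f : EuclideanSpace ℝ (Fin n) → ℝ) (L : ℝ) (hL : 0 < L)
    (hdiff : Differentiable ℝ f)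
    (hlip : ∀ x y, ‖gradient f x - gradient f y‖ ≤ L * ‖x - y‖)
    (x y : EuclideanSpace ℝ (Fin n)) :
    f y ≤ f x + ⟪gradient f x, y - x⟫ + L / 2 * ‖y - x‖ ^ 2 := by
  set v := y - x with hv
  have hγ : ∀ t : ℝ, HasDerivAt (fun t : ℝ => x + t • v) v t := fun t => by
    simpa using ((hasDerivAt_id t).smul_const v).const_add x
  have hφ : ∀ t : ℝ, HasDerivAt (fun t : ℝ => f (x + t • v))
      ⟪gradient f (x + t • v), v⟫ t := by
    intro t
    have h1 := ((hdiff (x + t • v)).hasGradientAt).hasFDerivAt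
    have := h1.comp_hasDerivAt t (hγ t)
    simpa [InnerProductSpace.toDual_apply_apply, Function.comp_def] using this
  set h : ℝ → ℝ := fun t => f (x + t • v) - t * ⟪gradient f x, v⟫ - L / 2 * t ^ 2 * ‖v‖ ^ 2
    with hh
  have hd : ∀ t : ℝ, HasDerivAt h
      (⟪gradient f (x + t • v), v⟫ - ⟪gradient f x, v⟫ - L * t * ‖v‖ ^ 2) t := by
    intro t
    have h2 : HasDerivAt (fun t : ℝ => t * ⟪gradient f x, v⟫) ⟪gradient f x, v⟫ t := by
      simpa using (hasDerivAt_id t).mul_const ⟪gradient f x, v⟫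
    have h3 : HasDerivAt (fun t : ℝ => L / 2 * t ^ 2 * ‖v‖ ^ 2) (L * t * ‖v‖ ^ 2) t := by
      have := ((hasDerivAt_pow 2 t).const_mul (L / 2)).mul_const (‖v‖ ^ 2)
      refine this.congr_deriv ?_
      ring
    exact ((hφ t).sub h2).sub h3
  have hanti : AntitoneOn h (Set.Icc 0 1) := by
    apply antitoneOn_of_deriv_nonpos (convex_Icc 0 1)
    · exact (continuous_iff_continuousAt.2 (fun t => (hd t).continuousAt)).continuousOn
    · intro t ht
      exact ((hd t).differentiableAt).differentiableWithinAt
    · intro t ht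
      rw [interior_Icc] at ht
      rw [(hd t).deriv]
      have hb : ⟪gradient f (x + t • v) - gradient f x, v⟫ ≤ L * t * ‖v‖ ^ 2 := by
        calc ⟪gradient f (x + t • v) - gradient f x, v⟫
            ≤ ‖gradient f (x + t • v) - gradient f x‖ * ‖v‖ := real_inner_le_norm _ _
          _ ≤ (L * ‖(x + t • v) - x‖) * ‖v‖ := by
              have := hlip (x + t • v) x
              exact mul_le_mul_of_nonneg_right this (norm_nonneg _)
          _ = L * t * ‖v‖ ^ 2 := by
              simp [norm_smul, abs_of_pos ht.1]; ring
      have := inner_sub_left (𝕜 := ℝ) (gradient f (x + t • v)) (gradient f x) v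
      nlinarith [hb, this]
  have h10 : h 1 ≤ h 0 := hanti (by norm_num) (by norm_num) (by norm_num)
  have hy : x + v = y := by rw [hv]; abel
  have e1 : h 1 = f y - ⟪gradient f x, v⟫ - L / 2 * ‖v‖ ^ 2 := by
    simp only [hh, one_smul, one_pow, one_mul, mul_one, hy]
  have e0 : h 0 = f x := by
    simp only [hh, zero_smul, add_zero, zero_mul, sub_zero, mul_zero]
    ring_nf
  rw [e1, e0] at h10
  linarith

theorem stmt5 {n : ℕ} (f : EuclideanSpace ℝ (Fin n) → ℝ) (L μ Δ fstar : ℝ)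
    (hμ : 0 < μ) (hμL : μ ≤ L) (hΔ : 0 ≤ Δ)
    (hdiff : Differentiable ℝ f)
    (hlip : ∀ x y, ‖gradient f x - gradient f y‖ ≤ L * ‖x - y‖)
    (xstar : EuclideanSpace ℝ (Fin n)) (hfstar : f xstar = fstar)
    (hmin : ∀ y, fstar ≤ f y)
    (hPL : ∀ z, f z - fstar ≤ (1 / (2 * μ)) * ‖gradient f z‖ ^ 2)
    (gt : EuclideanSpace ℝ (Fin n) → EuclideanSpace ℝ (Fin n))
    (herr : ∀ z, ‖gradient f z - gt z‖ ≤ Δ)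
    (x : ℕ → EuclideanSpace ℝ (Fin n))
    (hstep : ∀ k, x (k + 1) = x k - (1 / L) • gt (x k)) :
    ∀ k : ℕ, f (x (k + 1)) - fstar ≤
      (1 - μ / L) ^ (k + 1) * (f (x 0) - fstar) + Δ ^ 2 / (2 * μ) := by
  have hL : 0 < L := lt_of_lt_of_le hμ hμL
  -- one-step inequality
  have hstep2 : ∀ k, f (x (k + 1)) - fstar ≤
      (1 - μ / L) * (f (x k) - fstar) + Δ ^ 2 / (2 * L) := by
    intro k
    set z := x k
    set g := gradient f z with hg
    set e := g - gt z with he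
    have hgt : gt z = g - e := by rw [he]; abel
    have hd := descent f L hL hdiff hlip z (x (k + 1))
    have hxy : x (k + 1) - z = -((1 / L) • (g - e)) := by
      rw [hstep k, hgt]; abel
    rw [hxy] at hd
    have hin : ⟪g, -((1 / L) • (g - e))⟫ = -(1 / L) * (‖g‖ ^ 2 - ⟪g, e⟫) := by
      rw [inner_neg_right, real_inner_smul_right, inner_sub_right,
        real_inner_self_eq_norm_sq]
      ring
    have hnn : ‖-((1 / L) • (g - e))‖ ^ 2 = (1 / L) ^ 2 * ‖g - e‖ ^ 2 := by
      rw [norm_neg, norm_smul, Real.norm_eq_abs, abs_of_pos (by positivity : (0:ℝ) < 1 / L),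
        mul_pow]
    have hexp : ‖g - e‖ ^ 2 = ‖g‖ ^ 2 - 2 * ⟪g, e⟫ + ‖e‖ ^ 2 := by
      rw [@norm_sub_sq_real]
    have hPLz : 2 * μ * (f z - fstar) ≤ ‖g‖ ^ 2 := by
      have := hPL z
      rw [← hg] at this
      have h2μ : (0:ℝ) < 2 * μ := by linarith
      calc 2 * μ * (f z - fstar) ≤ 2 * μ * ((1 / (2 * μ)) * ‖g‖ ^ 2) := by
            exact mul_le_mul_of_nonneg_left this (le_of_lt h2μ)
        _ = ‖g‖ ^ 2 := by field_simp
    have herrz : ‖e‖ ^ 2 ≤ Δ ^ 2 := by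
      have := herr z
      rw [← hg, ← he] at this
      nlinarith [norm_nonneg e]
    rw [hin, hnn, hexp] at hd
    have key : f (x (k + 1)) ≤ f z - 1 / (2 * L) * ‖g‖ ^ 2 + 1 / (2 * L) * ‖e‖ ^ 2 := by
      have : L / 2 * ((1 / L) ^ 2 * (‖g‖ ^ 2 - 2 * ⟪g, e⟫ + ‖e‖ ^ 2))
          + (-(1 / L) * (‖g‖ ^ 2 - ⟪g, e⟫))
          = -(1 / (2 * L)) * ‖g‖ ^ 2 + 1 / (2 * L) * ‖e‖ ^ 2 := by
        field_simp
        ring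
      nlinarith [hd]
    have h1 : μ / L * (f z - fstar) ≤ 1 / (2 * L) * ‖g‖ ^ 2 := by
      calc μ / L * (f z - fstar) = 1 / (2 * L) * (2 * μ * (f z - fstar)) := by
            field_simp
        _ ≤ 1 / (2 * L) * ‖g‖ ^ 2 := mul_le_mul_of_nonneg_left hPLz (by positivity)
    have h2 : 1 / (2 * L) * ‖e‖ ^ 2 ≤ Δ ^ 2 / (2 * L) := by
      rw [div_eq_mul_one_div (Δ^2), mul_comm (Δ^2)]
      exact mul_le_mul_of_nonneg_left herrz (by positivity)
    have hexp2 : (1 - μ / L) * (f z - fstar) = (f z - fstar) - μ / L * (f z - fstar) := by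
      ring
    linarith [key, h1, h2]
  -- induction
  have hq0 : 0 ≤ 1 - μ / L := by
    rw [sub_nonneg, div_le_one hL]; exact hμL
  have main : ∀ k : ℕ, f (x k) - fstar ≤
      (1 - μ / L) ^ k * (f (x 0) - fstar) + Δ ^ 2 / (2 * μ) := by
    intro k
    induction k with
    | zero => simp; positivity
    | succ k ih =>
      have h3 := hstep2 k
      have h4 : (1 - μ / L) * (f (x k) - fstar) ≤
          (1 - μ / L) * ((1 - μ / L) ^ k * (f (x 0) - fstar) + Δ ^ 2 / (2 * μ)) :=
        mul_le_mul_of_nonneg_left ih hq0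
      have h5 : (1 - μ / L) * ((1 - μ / L) ^ k * (f (x 0) - fstar) + Δ ^ 2 / (2 * μ))
          + Δ ^ 2 / (2 * L)
          = (1 - μ / L) ^ (k + 1) * (f (x 0) - fstar) + Δ ^ 2 / (2 * μ) := by
        rw [pow_succ]
        have hc : (1 - μ / L) * (Δ ^ 2 / (2 * μ)) + Δ ^ 2 / (2 * L) = Δ ^ 2 / (2 * μ) := by
          field_simp
          ring
        linear_combination hc
      linarith
  exact fun k => main (k + 1)
end

section
/- If ‖∇f(x) - g̃(x)‖ ≤ Δ, then ‖∇f(x)‖² ≥ ‖g̃(x)‖²/2 - Δ², and consequently the inexact gradient step with step size 1/L on an L-smooth function satisfies f(x_{k+1}) - f(x_k) ≤ Δ²/L - ‖g̃(x_k)‖²/(4L). -/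
open scoped RealInnerProductSpace

lemma descent_lemma {n : ℕ} (f : EuclideanSpace ℝ (Fin n) → ℝ) (L : ℝ)
    (hL : 0 < L) (hdiff : Differentiable ℝ f)
    (hlip : ∀ x y, ‖gradient f x - gradient f y‖ ≤ L * ‖x - y‖)
    (x v : EuclideanSpace ℝ (Fin n)) :
    f (x + v) ≤ f x + ⟪gradient f x, v⟫ + L / 2 * ‖v‖ ^ 2 := by
  set φ : ℝ → ℝ := fun t => f (x + t • v) - t * ⟪gradient f x, v⟫ - L / 2 * t ^ 2 * ‖v‖ ^ 2
    with hφ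
  have hline : ∀ t : ℝ, HasDerivAt (fun t : ℝ => x + t • v) v t := fun t => by
    simpa using ((hasDerivAt_id t).smul_const v).const_add x
  have hfd : ∀ t : ℝ, HasDerivAt (fun t : ℝ => f (x + t • v))
      ⟪gradient f (x + t • v), v⟫ t := fun t => by
    have h1 := ((hdiff (x + t • v)).hasGradientAt).hasFDerivAt
    have := h1.comp_hasDerivAt t (hline t)
    simpa [InnerProductSpace.toDual_apply_apply, Function.comp_def] using this
  have hφd : ∀ t : ℝ, HasDerivAt φ
      (⟪gradient f (x + t • v), v⟫ - ⟪gradient f x, v⟫ - L / 2 * (2 * t) * ‖v‖ ^ 2) t := by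
    intro t
    have h2 : HasDerivAt (fun t : ℝ => t * ⟪gradient f x, v⟫) ⟪gradient f x, v⟫ t := by
      simpa using (hasDerivAt_id t).mul_const ⟪gradient f x, v⟫
    have h3 : HasDerivAt (fun t : ℝ => L / 2 * t ^ 2 * ‖v‖ ^ 2)
        (L / 2 * (2 * t) * ‖v‖ ^ 2) t := by
      have := ((hasDerivAt_pow 2 t).const_mul (L / 2)).mul_const (‖v‖ ^ 2)
      simpa [mul_comm, mul_assoc, mul_left_comm] using this
    exact ((hfd t).sub h2).sub h3
  have hanti : AntitoneOn φ (Set.Icc 0 1) := by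
    apply antitoneOn_of_deriv_nonpos (convex_Icc 0 1)
    · exact Continuous.continuousOn (by
        have : ∀ t, DifferentiableAt ℝ φ t := fun t => (hφd t).differentiableAt
        exact (Differentiable.continuous this))
    · intro t ht
      exact (hφd t).differentiableAt.differentiableWithinAt
    · intro t ht
      rw [interior_Icc] at ht
      rw [(hφd t).deriv]
      have hin : ⟪gradient f (x + t • v) - gradient f x, v⟫ ≤
          ‖gradient f (x + t • v) - gradient f x‖ * ‖v‖ := real_inner_le_norm _ _
      have hl : ‖gradient f (x + t • v) - gradient f x‖ ≤ L * (t * ‖v‖) := by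
        have := hlip (x + t • v) x
        simpa [norm_smul, abs_of_nonneg ht.1.le] using this
      have hv : (0:ℝ) ≤ ‖v‖ := norm_nonneg _
      rw [inner_sub_left] at hin
      nlinarith [ht.1.le, mul_le_mul_of_nonneg_right hl hv]
  have := hanti (Set.left_mem_Icc.2 zero_le_one) (Set.right_mem_Icc.2 zero_le_one) zero_le_one
  simp only [hφ] at this
  simp only [one_smul, zero_smul, add_zero, one_pow, one_mul, zero_pow, mul_zero,
    zero_mul, sub_zero] at this
  linarith

theorem stmt6 {n : ℕ} (f : EuclideanSpace ℝ (Fin n) → ℝ) (L Δ : ℝ)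
    (hL : 0 < L) (hΔ : 0 ≤ Δ)
    (hdiff : Differentiable ℝ f)
    (hlip : ∀ x y, ‖gradient f x - gradient f y‖ ≤ L * ‖x - y‖)
    (gt : EuclideanSpace ℝ (Fin n) → EuclideanSpace ℝ (Fin n))
    (herr : ∀ z, ‖gradient f z - gt z‖ ≤ Δ)
    (xk xk1 : EuclideanSpace ℝ (Fin n))
    (hstep : xk1 = xk - (1 / L) • gt xk) :
    (∀ z, ‖gradient f z‖ ^ 2 ≥ ‖gt z‖ ^ 2 / 2 - Δ ^ 2) ∧
    f xk1 - f xk ≤ Δ ^ 2 / L - ‖gt xk‖ ^ 2 / (4 * L) := by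
  constructor
  · intro z
    have h1 : ‖gt z‖ ≤ ‖gradient f z‖ + Δ := by
      have := norm_sub_norm_le (gt z) (gradient f z)
      rw [← norm_neg (gt z - gradient f z), neg_sub] at this
      linarith [herr z]
    have h2 : ‖gt z‖ ^ 2 ≤ (‖gradient f z‖ + Δ) ^ 2 := by
      nlinarith [norm_nonneg (gt z)]
    nlinarith [sq_nonneg (‖gradient f z‖ - Δ)]
  · have hd := descent_lemma f L hL hdiff hlip xk (-(1 / L) • gt xk)
    have hx1 : xk1 = xk + -(1 / L) • gt xk := by
      rw [hstep, sub_eq_add_neg, neg_smul]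
    rw [← hx1] at hd
    have hL' : (0:ℝ) < 1 / L := by positivity
    have hg : (0:ℝ) ≤ ‖gt xk‖ := norm_nonneg _
    have hnv : ‖-(1 / L) • gt xk‖ = (1 / L) * ‖gt xk‖ := by
      rw [norm_smul, Real.norm_eq_abs, abs_neg, abs_of_pos hL']
    have hiv : ⟪gradient f xk, -(1 / L) • gt xk⟫ = -(1 / L) * ⟪gradient f xk, gt xk⟫ := by
      rw [inner_smul_right]
    have hig : ⟪gradient f xk, gt xk⟫ ≥ ‖gt xk‖ ^ 2 - Δ * ‖gt xk‖ := by
      have h1 : ⟪gradient f xk - gt xk, gt xk⟫ ≥ -(Δ * ‖gt xk‖) := by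
        have habs := abs_real_inner_le_norm (gradient f xk - gt xk) (gt xk)
        have := mul_le_mul_of_nonneg_right (herr xk) (norm_nonneg (gt xk))
        have := neg_abs_le ⟪gradient f xk - gt xk, gt xk⟫
        nlinarith
      rw [inner_sub_left, real_inner_self_eq_norm_sq] at h1
      linarith
    rw [hnv, hiv] at hd
    have h2 := mul_le_mul_of_nonneg_left hig.le hL'.le
    have hamgm : Δ * ‖gt xk‖ ≤ Δ ^ 2 + ‖gt xk‖ ^ 2 / 4 := by
      nlinarith [sq_nonneg (Δ - ‖gt xk‖ / 2)]
    have hmul := mul_le_mul_of_nonneg_right hamgm hL'.le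
    have e1 : L / 2 * ((1 / L) * ‖gt xk‖) ^ 2 = ‖gt xk‖ ^ 2 * (1 / L) / 2 := by
      field_simp
    have e2 : ‖gt xk‖ ^ 2 / (4 * L) = ‖gt xk‖ ^ 2 * (1 / L) / 4 := by
      ring
    have e3 : Δ ^ 2 / L = Δ ^ 2 * (1 / L) := by ring
    have expand : -(1 / L) * ⟪gradient f xk, gt xk⟫ =
        -((1 / L) * ⟪gradient f xk, gt xk⟫) := by ring
    have expand2 : (1 / L) * (‖gt xk‖ ^ 2 - Δ * ‖gt xk‖) =
        ‖gt xk‖ ^ 2 * (1 / L) - Δ * ‖gt xk‖ * (1 / L) := by ring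
    have expand3 : (Δ ^ 2 + ‖gt xk‖ ^ 2 / 4) * (1 / L) =
        Δ ^ 2 * (1 / L) + ‖gt xk‖ ^ 2 * (1 / L) / 4 := by ring
    rw [e1] at hd
    rw [e2, e3]
    rw [expand2] at h2
    rw [expand3] at hmul
    linarith
end
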